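/- Let G be a connected graph with v vertices and let L(G) be the graph obtained by attaching one new leaf to each vertex of G. Then the Morse complex M(L(G)) is homotopy equivalent to the sphere S^{v-1}. -/

import Mathlib

open Finset

/-- An abstract simplicial complex on vertex type `V`. -/
structure SComplex (V : Type*) where
  faces : Finset V → Prop
  not_empty : ¬ faces ∅
  down_closed : ∀ {σ τ : Finset V}, faces τ → σ ⊆ τ → σ.Nonempty → faces σ

/-- The complex generated by a set of simplices (downward closure). -/
def ofGens {V : Type*} (gens : Set (Finset V)) : SComplex V where
  faces σ := σ.Nonempty ∧ ∃ τ ∈ gens, σ ⊆ τ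
  not_empty h := by simpa using h.1
  down_closed := by
    rintro σ τ ⟨-, τ', hτ', hsub'⟩ hsub hne
    exact ⟨hne, τ', hτ', hsub.trans hsub'⟩

/-- A primitive (gradient) vector field on `K`: a single regular pair `(σ, τ)`
with `σ` a codimension-one face of `τ`. -/
structure VPair {V : Type*} (K : SComplex V) where
  lo : Finset V
  hi : Finset V
  lo_face : K.faces lo
  hi_face : K.faces hi
  lo_sub : lo ⊆ hi
  card_eq : hi.card = lo.card + 1

noncomputable instance {V : Type*} (K : SComplex V) : DecidableEq (VPair K) :=
  Classical.decEq _

/-- Two primitive pairs share no simplex. -/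
def VPair.Compatible {V : Type*} {K : SComplex V} (p q : VPair K) : Prop :=
  p.lo ≠ q.lo ∧ p.lo ≠ q.hi ∧ p.hi ≠ q.lo ∧ p.hi ≠ q.hi

/-- A discrete vector field: each simplex occurs in at most one pair. -/
def IsDVF {V : Type*} {K : SComplex V} (W : Set (VPair K)) : Prop :=
  ∀ p ∈ W, ∀ q ∈ W, p ≠ q → VPair.Compatible p q

/-- Existence of a nontrivial closed `V`-path. -/
def HasClosedPath {V : Type*} {K : SComplex V} (W : Set (VPair K)) : Prop :=
  ∃ k : ℕ, 0 < k ∧ ∃ c : ZMod k → VPair K, (∀ i, c i ∈ W) ∧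
    ∀ i, (c (i + 1)).lo ⊆ (c i).hi ∧ (c (i + 1)).lo ≠ (c i).lo ∧
      (c (i + 1)).lo.card + 1 = (c i).hi.card

/-- A gradient vector field: a discrete vector field with no nontrivial closed path. -/
def IsGVF {V : Type*} {K : SComplex V} (W : Set (VPair K)) : Prop :=
  IsDVF W ∧ ¬ HasClosedPath W

/-- The Morse complex of `K`: vertices are primitive gradient vector fields,
simplices are gradient vector fields. -/
def MorseComplex {V : Type*} (K : SComplex V) : SComplex (VPair K) where
  faces S := S.Nonempty ∧ IsGVF {p | p ∈ S}
  not_empty h := by simpa using h.1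
  down_closed := by
    rintro σ τ ⟨hne', hdvf, hnc⟩ hsub hne
    refine ⟨hne, fun p hp q hq hpq => hdvf p (hsub hp) q (hsub hq) hpq, fun h => hnc ?_⟩
    obtain ⟨k, hk, c, hc, hpath⟩ := h
    exact ⟨k, hk, c, fun i => hsub (hc i), hpath⟩

/-- The pure Morse complex: the subcomplex of `MorseComplex K` generated by the
facets of maximum dimension (maximum gradient vector fields). -/
def pureMorse {V : Type*} (K : SComplex V) : SComplex (VPair K) where
  faces S := (MorseComplex K).faces S ∧ ∃ T : Finset (VPair K), S ⊆ T ∧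
      (MorseComplex K).faces T ∧
      ∀ T' : Finset (VPair K), (MorseComplex K).faces T' → T'.card ≤ T.card
  not_empty h := (MorseComplex K).not_empty h.1
  down_closed := by
    rintro σ τ ⟨hτ, T, hsub', hT, hmax⟩ hsub hne
    exact ⟨(MorseComplex K).down_closed hτ hsub hne, T, hsub.trans hsub', hT, hmax⟩

/-- `σ` is a facet (maximal simplex) of `K`. -/
def IsFacet {V : Type*} (K : SComplex V) (σ : Finset V) : Prop :=
  K.faces σ ∧ ∀ τ, K.faces τ → σ ⊆ τ → σ = τ

/-- `w` dominates `w'`: every facet containing `w'` contains `w`. -/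
def Dominates {V : Type*} (K : SComplex V) (w w' : V) : Prop :=
  ∀ σ, IsFacet K σ → w' ∈ σ → w ∈ σ

/-- `K` is minimal: no vertex dominates another vertex. -/
def MinimalComplex {V : Type*} (K : SComplex V) : Prop :=
  ∀ w w' : V, K.faces {w} → K.faces {w'} → w ≠ w' → ¬ Dominates K w w'

/-- Strong collapsibility of a face predicate: a sequence of removals of
dominated vertices reaching a single point. -/
inductive SCAux {V : Type*} : (Finset V → Prop) → Prop
  | point (F : Finset V → Prop) (v : V) (h : ∀ σ, F σ ↔ σ = {v}) : SCAux F
  | step (F : Finset V → Prop) (w w' : V) (hne : w ≠ w') (hw : F {w}) (hw' : F {w'})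
      (hdom : ∀ σ, (F σ ∧ ∀ τ, F τ → σ ⊆ τ → σ = τ) → w' ∈ σ → w ∈ σ)
      (h : SCAux (fun σ => F σ ∧ w' ∉ σ)) : SCAux F

def StronglyCollapsible {V : Type*} (K : SComplex V) : Prop := SCAux K.faces

/-- `F` strongly collapses to `G` by a sequence of removals of dominated vertices. -/
inductive SCTo {V : Type*} : (Finset V → Prop) → (Finset V → Prop) → Prop
  | refl (F : Finset V → Prop) : SCTo F F
  | step (F G : Finset V → Prop) (w w' : V) (hne : w ≠ w') (hw : F {w}) (hw' : F {w'})
      (hdom : ∀ σ, (F σ ∧ ∀ τ, F τ → σ ⊆ τ → σ = τ) → w' ∈ σ → w ∈ σ)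
      (h : SCTo (fun σ => F σ ∧ w' ∉ σ) G) : SCTo F G

/-- Collapsibility (Forman): removal of free pairs down to a point. -/
inductive CollAux {V : Type*} : (Finset V → Prop) → Prop
  | point (F : Finset V → Prop) (v : V) (h : ∀ σ, F σ ↔ σ = {v}) : CollAux F
  | step (F : Finset V → Prop) (σ τ : Finset V) (hστ : σ ⊂ τ) (hσ : F σ) (hτ : F τ)
      (hfree : ∀ ρ, F ρ → σ ⊂ ρ → ρ = τ)
      (h : CollAux (fun ρ => F ρ ∧ ρ ≠ σ ∧ ρ ≠ τ)) : CollAux F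

def Collapsible {V : Type*} (K : SComplex V) : Prop := CollAux K.faces

/-- The degree of a vertex: the number of edges of `K` containing it. -/
noncomputable def sdeg {V : Type*} (K : SComplex V) (x : V) : ℕ :=
  Set.ncard {σ : Finset V | K.faces σ ∧ σ.card = 2 ∧ x ∈ σ}

/-- Image of a finset, with a classical decidability instance. -/
noncomputable def fimage {V W : Type*} (f : V → W) (σ : Finset V) : Finset W :=
  haveI := Classical.decEq W
  σ.image f

/-- An isomorphism between two simplicial complexes given by face predicates. -/
structure ComplexIso {V W : Type*} (F : Finset V → Prop) (G : Finset W → Prop) where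
  toFun : V → W
  invFun : W → V
  left_inv : ∀ x, F {x} → invFun (toFun x) = x
  right_inv : ∀ y, G {y} → toFun (invFun y) = y
  map_face : ∀ σ, F σ → G (fimage toFun σ)
  inv_face : ∀ τ, G τ → F (fimage invFun τ)

/-- The join of two simplicial complexes. -/
def sJoin {V W : Type*} [DecidableEq V] [DecidableEq W] (K : SComplex V) (L : SComplex W) :
    SComplex (V ⊕ W) :=
  ofGens {σ | ∃ α β, (K.faces α ∨ α = ∅) ∧ (L.faces β ∨ β = ∅) ∧
    σ = α.image Sum.inl ∪ β.image Sum.inr}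

/-- The disjoint union of two simplicial complexes. -/
def sDisjUnion {V W : Type*} [DecidableEq V] [DecidableEq W] (K : SComplex V) (L : SComplex W) :
    SComplex (V ⊕ W) :=
  ofGens ({σ | ∃ α, K.faces α ∧ σ = α.image Sum.inl} ∪
          {σ | ∃ β, L.faces β ∧ σ = β.image Sum.inr})

/-- The simplicial complex of a simple graph (vertices and edges). -/
def graphComplex {V : Type*} [DecidableEq V] (G : SimpleGraph V) : SComplex V :=
  ofGens ({σ | ∃ x, σ = {x}} ∪ {σ | ∃ x y, G.Adj x y ∧ σ = ({x, y} : Finset V)})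

/-- Attach a leaf (pendant edge) to `K` at the vertex `x`. -/
def attachLeaf {V : Type*} [DecidableEq V] (K : SComplex V) (x : V) : SComplex (V ⊕ Unit) :=
  ofGens ({σ | ∃ α, K.faces α ∧ σ = α.image Sum.inl} ∪
          {({Sum.inl x, Sum.inr ()} : Finset (V ⊕ Unit))})

/-- The cycle graph on `ZMod n`. -/
def cycleGraph (n : ℕ) : SimpleGraph (ZMod n) :=
  SimpleGraph.fromRel (fun i j => j = i + 1)

/-- Attach one new leaf to every vertex of a graph. -/
def addLeaves {V : Type*} [DecidableEq V] (G : SimpleGraph V) : SComplex (V ⊕ V) :=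
  ofGens ({σ | ∃ x y, G.Adj x y ∧ σ = ({Sum.inl x, Sum.inl y} : Finset (V ⊕ V))} ∪
          {σ | ∃ u, σ = ({Sum.inl u, Sum.inr u} : Finset (V ⊕ V))})

/-- The geometric realization of `K`, inside `V → ℝ`. -/
def realization {V : Type*} (K : SComplex V) : Set (V → ℝ) :=
  {f | ∃ σ, K.faces σ ∧ (∀ x, 0 ≤ f x) ∧ (∀ x, f x ≠ 0 → x ∈ σ) ∧ ∑ x ∈ σ, f x = 1}

/-- A Hasse-diagram edge of a poset: a covering pair. -/
structure HEdge (P : Type*) [PartialOrder P] where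
  lo : P
  hi : P
  cov : lo ⋖ hi

noncomputable instance {P : Type*} [PartialOrder P] : DecidableEq (HEdge P) :=
  Classical.decEq _

def HEdge.Compat {P : Type*} [PartialOrder P] (p q : HEdge P) : Prop :=
  p.lo ≠ q.lo ∧ p.lo ≠ q.hi ∧ p.hi ≠ q.lo ∧ p.hi ≠ q.hi

def HasPosetCycle {P : Type*} [PartialOrder P] (W : Set (HEdge P)) : Prop :=
  ∃ k : ℕ, 0 < k ∧ ∃ c : ZMod k → HEdge P, (∀ i, c i ∈ W) ∧
    ∀ i, (c (i + 1)).lo ⋖ (c i).hi ∧ (c (i + 1)).lo ≠ (c i).lo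

/-- The generalized Morse complex `f(P)` of a poset: simplices are acyclic
matchings of the Hasse diagram of `P`. -/
def genMorse (P : Type*) [PartialOrder P] : SComplex (HEdge P) where
  faces S := S.Nonempty ∧ (∀ p ∈ S, ∀ q ∈ S, p ≠ q → HEdge.Compat p q) ∧
    ¬ HasPosetCycle {p | p ∈ S}
  not_empty h := by simpa using h.1
  down_closed := by
    rintro σ τ ⟨-, hm, hc⟩ hsub hne
    refine ⟨hne, fun p hp q hq h => hm p (hsub hp) q (hsub hq) h, fun h => hc ?_⟩
    obtain ⟨k, hk, c, hc', hp⟩ := h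
    exact ⟨k, hk, c, fun i => hsub (hc' i), hp⟩

/-- The automorphism group of a simplicial complex, as a subgroup of `Perm V`. -/
def autGroup {V : Type*} [DecidableEq V] (K : SComplex V) : Subgroup (Equiv.Perm V) where
  carrier := {e | ∀ σ : Finset V, K.faces σ ↔ K.faces (σ.image e)}
  one_mem' := by intro σ; simp
  mul_mem' := by
    intro a b ha hb σ
    rw [hb σ, ha (σ.image b)]
    simp [Finset.image_image, Equiv.Perm.coe_mul]
  inv_mem' := by
    intro a ha σ
    have := ha (σ.image ⇑a⁻¹)
    simpa [Finset.image_image, Function.comp_def, Equiv.Perm.inv_def, Equiv.apply_symm_apply,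
      Finset.image_id'] using this.symm

/-- The full subcomplex of `K` on a set `S` of vertices. -/
def restrictTo {V : Type*} (K : SComplex V) (S : Set V) : Finset V → Prop :=
  fun σ => K.faces σ ∧ ∀ x ∈ σ, x ∈ S

/-- `S` spans a fully connected subcomplex: `K = (K∣S) * (K∣Sᶜ)`. -/
def FullyConnected {V : Type*} [DecidableEq V] (K : SComplex V) (S : Set V) : Prop :=
  ∀ σ : Finset V, K.faces σ ↔ (σ.Nonempty ∧ ∃ α β : Finset V,
    (restrictTo K S α ∨ α = ∅) ∧ ((K.faces β ∧ ∀ x ∈ β, x ∉ S) ∨ β = ∅) ∧ σ = α ∪ β)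

/-- The primitive pair `(x, xy)` on an edge `{x,y}`. -/
def edgePair {V : Type*} [DecidableEq V] (K : SComplex V) (x y : V) (hxy : x ≠ y)
    (h : K.faces {x, y}) : VPair K where
  lo := {x}
  hi := {x, y}
  lo_face := K.down_closed h (by simp) (Finset.singleton_nonempty x)
  hi_face := h
  lo_sub := by simp
  card_eq := by
    rw [Finset.card_singleton, Finset.card_insert_of_notMem (by simp [hxy]),
      Finset.card_singleton]

section
open Finset
variable {X : Type*}

def realizationP (F : Finset X → Prop) : Set (X → ℝ) :=
  {f | ∃ σ, F σ ∧ (∀ x, 0 ≤ f x) ∧ (∀ x, f x ≠ 0 → x ∈ σ) ∧ ∑ x ∈ σ, f x = 1}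

lemma realization_eq (K : SComplex X) : realization K = realizationP K.faces := rfl

lemma realizationP_congr {F G : Finset X → Prop} (h : ∀ σ, F σ ↔ G σ) :
    realizationP F = realizationP G := by
  unfold realizationP; ext f; simp only [Set.mem_setOf_eq]
  exact ⟨fun ⟨σ, h1, h2⟩ => ⟨σ, (h σ).mp h1, h2⟩, fun ⟨σ, h1, h2⟩ => ⟨σ, (h σ).mpr h1, h2⟩⟩

lemma VPair.ext' {K : SComplex X} {p q : VPair K} (h1 : p.lo = q.lo) (h2 : p.hi = q.hi) : p = q := by
  cases p; cases q; cases h1; cases h2; rfl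
end

section
open Finset
variable {X : Type*} [DecidableEq X]

noncomputable def pushMap (w w' : X) (f : X → ℝ) : X → ℝ :=
  fun x => if x = w' then 0 else if x = w then f w + f w' else f x

lemma pushMap_continuous (w w' : X) : Continuous (pushMap w w') := by
  apply continuous_pi; intro x
  show Continuous fun f : X → ℝ => if x = w' then (0:ℝ) else if x = w then f w + f w' else f x
  by_cases h : x = w'
  · simp only [if_pos h]; exact continuous_const
  · by_cases h2 : x = w
    · simp only [if_neg h, if_pos h2]; exact (continuous_apply w).add (continuous_apply w')
    · simp only [if_neg h, if_neg h2]; exact continuous_apply x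

variable {F : Finset X → Prop} {w w' : X}

lemma mem_push (hne : w ≠ w')
    (hdc : ∀ σ τ : Finset X, F τ → σ ⊆ τ → σ.Nonempty → F σ)
    (hdom : ∀ σ, F σ → w' ∈ σ → F (insert w σ))
    {f : X → ℝ} (hf : f ∈ realizationP F) :
    pushMap w w' f ∈ realizationP (fun σ => F σ ∧ w' ∉ σ) ∧
    ∀ t : ℝ, 0 ≤ t → t ≤ 1 →
      (fun x => t * f x + (1 - t) * pushMap w w' f x) ∈ realizationP F := by
  obtain ⟨σ, hσ, hpos, hsupp, hsum⟩ := hf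
  by_cases hw' : w' ∈ σ
  · have hfτ : F (insert w σ) := hdom σ hσ hw'
    set τ := insert w σ with hτdef
    set σ' := τ.erase w' with hσ'def
    have hwσ' : w ∈ σ' := Finset.mem_erase.mpr ⟨hne, Finset.mem_insert_self _ _⟩
    have hσ'F : F σ' := hdc σ' τ hfτ (Finset.erase_subset _ _) ⟨w, hwσ'⟩
    have hw'τ : w' ∈ τ := Finset.mem_insert_of_mem hw'
    have hw'σ' : w' ∉ σ' := Finset.notMem_erase _ _
    have hτsum : ∑ x ∈ τ, f x = 1 := by
      by_cases hwσ : w ∈ σ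
      · rw [hτdef, Finset.insert_eq_self.mpr hwσ]; exact hsum
      · rw [hτdef, Finset.sum_insert hwσ]
        have : f w = 0 := by_contra fun h => hwσ (hsupp w h)
        rw [this, zero_add]; exact hsum
    have hpushsum : ∑ x ∈ σ', pushMap w w' f x = 1 := by
      have h1 : ∑ x ∈ σ', pushMap w w' f x = ∑ x ∈ σ', (f x + if x = w then f w' else 0) := by
        apply Finset.sum_congr rfl
        intro x hx
        have hxw' : x ≠ w' := (Finset.mem_erase.mp hx).1
        unfold pushMap
        rw [if_neg hxw']
        by_cases hxw : x = w
        · rw [if_pos hxw, if_pos hxw, hxw]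
        · rw [if_neg hxw, if_neg hxw, add_zero]
      rw [h1, Finset.sum_add_distrib, Finset.sum_ite_eq' σ' w (fun _ => f w'), if_pos hwσ']
      have h2 : ∑ x ∈ σ', f x + f w' = ∑ x ∈ τ, f x := by
        rw [← Finset.insert_erase hw'τ, Finset.sum_insert (Finset.notMem_erase _ _), ← hσ'def]
        ring
      rw [h2, hτsum]
    have hpushpos : ∀ x, 0 ≤ pushMap w w' f x := by
      intro x; unfold pushMap
      by_cases h : x = w'
      · rw [if_pos h]
      · rw [if_neg h]
        by_cases h2 : x = w
        · rw [if_pos h2]; exact add_nonneg (hpos w) (hpos w')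
        · rw [if_neg h2]; exact hpos x
    have hpushsupp : ∀ x, pushMap w w' f x ≠ 0 → x ∈ σ' := by
      intro x hx
      unfold pushMap at hx
      by_cases h : x = w'
      · rw [if_pos h] at hx; exact absurd rfl hx
      · rw [if_neg h] at hx
        by_cases h2 : x = w
        · rw [h2]; exact hwσ'
        · rw [if_neg h2] at hx
          exact Finset.mem_erase.mpr ⟨h, Finset.mem_insert_of_mem (hsupp x hx)⟩
    refine ⟨⟨σ', ⟨hσ'F, hw'σ'⟩, hpushpos, hpushsupp, hpushsum⟩, ?_⟩
    intro t ht0 ht1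
    refine ⟨τ, hfτ, ?_, ?_, ?_⟩
    · intro x
      exact add_nonneg (mul_nonneg ht0 (hpos x)) (mul_nonneg (by linarith) (hpushpos x))
    · intro x hx
      by_cases h1 : f x = 0
      · by_cases h2 : pushMap w w' f x = 0
        · exact absurd (by rw [h1, h2]; ring : t * f x + (1 - t) * pushMap w w' f x = 0) hx
        · exact Finset.mem_of_mem_erase (hpushsupp x h2)
      · exact Finset.mem_insert_of_mem (hsupp x h1)
    · have hτpush : ∑ x ∈ τ, pushMap w w' f x = 1 := by
        rw [← Finset.insert_erase hw'τ, Finset.sum_insert (Finset.notMem_erase _ _)]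
        have : pushMap w w' f w' = 0 := by unfold pushMap; rw [if_pos rfl]
        rw [this, zero_add, ← hσ'def, hpushsum]
      rw [Finset.sum_add_distrib, ← Finset.mul_sum, ← Finset.mul_sum, hτsum, hτpush]
      ring
  · have hfw' : f w' = 0 := by_contra fun h => hw' (hsupp w' h)
    have hpush : pushMap w w' f = f := by
      funext x; unfold pushMap
      by_cases h : x = w'
      · rw [if_pos h, h, hfw']
      · rw [if_neg h]
        by_cases h2 : x = w
        · rw [if_pos h2, hfw', add_zero, h2]
        · rw [if_neg h2]
    rw [hpush]
    refine ⟨⟨σ, ⟨hσ, hw'⟩, hpos, hsupp, hsum⟩, ?_⟩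
    intro t _ _
    have : (fun x => t * f x + (1 - t) * f x) = f := by funext x; ring
    rw [this]
    exact ⟨σ, hσ, hpos, hsupp, hsum⟩

lemma realizationP_mono {F G : Finset X → Prop} (h : ∀ σ, F σ → G σ) :
    realizationP F ⊆ realizationP G := by
  rintro f ⟨σ, h1, h2⟩; exact ⟨σ, h σ h1, h2⟩

noncomputable def elemCollapse (hne : w ≠ w')
    (hdc : ∀ σ τ : Finset X, F τ → σ ⊆ τ → σ.Nonempty → F σ)
    (hdom : ∀ σ, F σ → w' ∈ σ → F (insert w σ)) :
    ContinuousMap.HomotopyEquiv (realizationP F) (realizationP (fun σ => F σ ∧ w' ∉ σ)) where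
  toFun := ⟨fun f => ⟨pushMap w w' f.1, (mem_push hne hdc hdom f.2).1⟩,
    Continuous.subtype_mk ((pushMap_continuous w w').comp continuous_subtype_val) _⟩
  invFun := ⟨fun f => ⟨f.1, realizationP_mono (fun σ hσ => hσ.1) f.2⟩,
    Continuous.subtype_mk continuous_subtype_val _⟩
  left_inv := by
    refine ⟨⟨⟨fun p => ⟨fun x => (p.1 : ℝ) * p.2.1 x + (1 - (p.1 : ℝ)) * pushMap w w' p.2.1 x,
      ((mem_push hne hdc hdom p.2.2).2 p.1 p.1.2.1 p.1.2.2)⟩, ?_⟩, ?_, ?_⟩⟩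
    · apply Continuous.subtype_mk
      apply continuous_pi
      intro x
      have hc1 : Continuous fun p : unitInterval × (realizationP F) => (p.1 : ℝ) :=
        continuous_subtype_val.comp continuous_fst
      have hc2 : Continuous fun p : unitInterval × (realizationP F) => p.2.1 x :=
        (continuous_apply x).comp (continuous_subtype_val.comp continuous_snd)
      have hc3 : Continuous fun p : unitInterval × (realizationP F) => pushMap w w' p.2.1 x :=
        ((continuous_apply x).comp (pushMap_continuous w w')).comp
          (continuous_subtype_val.comp continuous_snd)
      exact (hc1.mul hc2).add ((continuous_const.sub hc1).mul hc3)
    · intro f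
      apply Subtype.ext
      funext x
      simp only [ContinuousMap.comp_apply, ContinuousMap.coe_mk]
      push_cast
      ring
    · intro f
      apply Subtype.ext
      funext x
      simp only [ContinuousMap.id_apply, ContinuousMap.coe_mk]
      push_cast
      ring
  right_inv := by
    have : ∀ f : realizationP (fun σ => F σ ∧ w' ∉ σ), pushMap w w' f.1 = f.1 := by
      intro g
      obtain ⟨σ, ⟨hσ, hw'2⟩, hpos, hsupp, hsum⟩ := g.2
      set f := g.1 with hfdef
      have hfw' : f w' = 0 := by_contra fun h => hw'2 (hsupp w' h)
      funext x; unfold pushMap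
      by_cases h : x = w'
      · rw [if_pos h, h, hfw']
      · rw [if_neg h]
        by_cases h2 : x = w
        · rw [if_pos h2, hfw', add_zero, h2]
        · rw [if_neg h2]
    have heq : (ContinuousMap.mk (fun f : realizationP F => (⟨pushMap w w' f.1, (mem_push hne hdc hdom f.2).1⟩ : realizationP (fun σ => F σ ∧ w' ∉ σ)))
        (Continuous.subtype_mk ((pushMap_continuous w w').comp continuous_subtype_val) _)).comp
        (ContinuousMap.mk (fun f : realizationP (fun σ => F σ ∧ w' ∉ σ) => (⟨f.1, realizationP_mono (fun σ hσ => hσ.1) f.2⟩ : realizationP F))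
        (Continuous.subtype_mk continuous_subtype_val _)) = ContinuousMap.id _ := by
      ext f
      exact congrFun (this f) _
    rw [heq]
  end

section
open Finset Sum
variable {V : Type*} [DecidableEq V] (G : SimpleGraph V)

local notation "K" => addLeaves G

def leafE (u : V) : Finset (V ⊕ V) := {Sum.inl u, Sum.inr u}

lemma leafE_mem_gens (u : V) : leafE u ∈
    ({σ | ∃ x y, G.Adj x y ∧ σ = ({Sum.inl x, Sum.inl y} : Finset (V ⊕ V))} ∪
      {σ | ∃ u, σ = ({Sum.inl u, Sum.inr u} : Finset (V ⊕ V))} : Set (Finset (V ⊕ V))) :=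
  Or.inr ⟨u, rfl⟩

lemma leafE_face (u : V) : (addLeaves G).faces (leafE u) :=
  ⟨⟨Sum.inl u, by simp [leafE]⟩, leafE u, leafE_mem_gens G u, le_refl _⟩

lemma leafE_card (u : V) : (leafE u : Finset (V ⊕ V)).card = 2 := by
  rw [leafE, Finset.card_insert_of_notMem (by simp), Finset.card_singleton]

def Pu (u : V) : VPair (addLeaves G) where
  lo := {Sum.inl u}
  hi := leafE u
  lo_face := (addLeaves G).down_closed (leafE_face G u) (by simp [leafE]) ⟨Sum.inl u, by simp⟩
  hi_face := leafE_face G u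
  lo_sub := by simp [leafE]
  card_eq := by rw [leafE_card, Finset.card_singleton]

def Qu (u : V) : VPair (addLeaves G) where
  lo := {Sum.inr u}
  hi := leafE u
  lo_face := (addLeaves G).down_closed (leafE_face G u) (by simp [leafE]) ⟨Sum.inr u, by simp⟩
  hi_face := leafE_face G u
  lo_sub := by simp [leafE]
  card_eq := by rw [leafE_card, Finset.card_singleton]

lemma Pu_ne_Qu (u u' : V) : Pu G u ≠ Qu G u' := by
  intro h
  have := congrArg VPair.lo h
  simp [Pu, Qu] at this

lemma Pu_inj : Function.Injective (Pu G) := by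
  intro u u' h
  have := congrArg VPair.lo h
  simpa [Pu] using this

lemma Qu_inj : Function.Injective (Qu G) := by
  intro u u' h
  have := congrArg VPair.lo h
  simpa [Qu] using this

/-- Faces of `addLeaves G` containing `inr b` are inside the leaf edge. -/
lemma face_sub_leafE {σ : Finset (V ⊕ V)} (hσ : (addLeaves G).faces σ) {b : V}
    (hb : Sum.inr b ∈ σ) : σ ⊆ leafE b := by
  obtain ⟨-, τ, hτ, hsub⟩ := hσ
  have hbτ := hsub hb
  rcases hτ with ⟨x, y, -, rfl⟩ | ⟨u, rfl⟩
  · exfalso; simp at hbτ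
  · simp only [Finset.mem_insert, Finset.mem_singleton] at hbτ
    rcases hbτ with h | h
    · exact absurd h (by simp)
    · obtain rfl : u = b := by injection h with h'; exact h'.symm
      exact hsub

lemma face_card_le {σ : Finset (V ⊕ V)} (hσ : (addLeaves G).faces σ) : σ.card ≤ 2 := by
  obtain ⟨-, τ, hτ, hsub⟩ := hσ
  refine (Finset.card_le_card hsub).trans ?_
  rcases hτ with ⟨x, y, -, rfl⟩ | ⟨u, rfl⟩ <;>
    exact (Finset.card_insert_le _ _).trans (by simp)

lemma pair_lo_card (p : VPair (addLeaves G)) : p.lo.card = 1 := by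
  have h1 : p.lo.Nonempty := p.lo_face.1
  have h2 : p.hi.card ≤ 2 := face_card_le G p.hi_face
  have h3 := p.card_eq
  have := Finset.card_pos.mpr h1
  omega

lemma pair_hi_card (p : VPair (addLeaves G)) : p.hi.card = 2 := by
  have := pair_lo_card G p
  have := p.card_eq
  omega

/-- A pair whose `hi` contains `inr b` is `Pu b` or `Qu b`. -/
lemma pair_with_inr {p : VPair (addLeaves G)} {b : V} (hb : Sum.inr b ∈ p.hi) :
    p = Pu G b ∨ p = Qu G b := by
  have hhi : p.hi = leafE b := by
    apply Finset.eq_of_subset_of_card_le (face_sub_leafE G p.hi_face hb)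
    rw [leafE_card, pair_hi_card]
  have hlo : p.lo ⊆ leafE b := hhi ▸ p.lo_sub
  have hcard := pair_lo_card G p
  obtain ⟨a, ha⟩ := Finset.card_eq_one.mp hcard
  have hamem : a ∈ leafE b := hlo (ha ▸ Finset.mem_singleton_self a)
  simp only [leafE, Finset.mem_insert, Finset.mem_singleton] at hamem
  rcases hamem with rfl | rfl
  · left; exact VPair.ext' (by rw [ha]; rfl) (by rw [hhi]; rfl)
  · right; exact VPair.ext' (by rw [ha]; rfl) (by rw [hhi]; rfl)

lemma pair_lo_inr {p : VPair (addLeaves G)} {b : V} (hb : Sum.inr b ∈ p.lo) : p = Qu G b := by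
  rcases pair_with_inr G (p.lo_sub hb) with h | h
  · exfalso
    rw [h] at hb
    simp [Pu] at hb
  · exact h

/-- Structure of "bad" pairs: pairs not of leaf type. -/
lemma bad_pair_struct (p : VPair (addLeaves G)) (hbad : ∀ u, p ≠ Pu G u ∧ p ≠ Qu G u) :
    ∃ b c, G.Adj b c ∧ p.lo = {Sum.inl b} ∧ p.hi = {Sum.inl b, Sum.inl c} := by
  obtain ⟨-, τ, hτ, hsub⟩ := p.hi_face
  rcases hτ with ⟨x, y, hadj, rfl⟩ | ⟨u, rfl⟩
  · -- hi ⊆ {inl x, inl y}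
    have hxy : x ≠ y := hadj.ne
    have hcard2 : ({Sum.inl x, Sum.inl y} : Finset (V ⊕ V)).card = 2 := by
      rw [Finset.card_insert_of_notMem (by simp [hxy]), Finset.card_singleton]
    have hhi : p.hi = {Sum.inl x, Sum.inl y} :=
      Finset.eq_of_subset_of_card_le hsub (by rw [hcard2, pair_hi_card])
    obtain ⟨a, ha⟩ := Finset.card_eq_one.mp (pair_lo_card G p)
    have hamem : a ∈ ({Sum.inl x, Sum.inl y} : Finset (V ⊕ V)) :=
      hhi ▸ p.lo_sub (ha ▸ Finset.mem_singleton_self a)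
    simp only [Finset.mem_insert, Finset.mem_singleton] at hamem
    rcases hamem with rfl | rfl
    · exact ⟨x, y, hadj, ha, hhi⟩
    · refine ⟨y, x, hadj.symm, ha, ?_⟩
      rw [hhi]; exact Finset.pair_comm _ _
  · -- hi ⊆ leafE u, so p = Pu u or Qu u, contradiction
    exfalso
    have : Sum.inr u ∈ p.hi := by
      have hhi : p.hi = leafE u :=
        Finset.eq_of_subset_of_card_le hsub (by rw [leafE_card, pair_hi_card])
      rw [hhi]; simp [leafE]
    rcases pair_with_inr G this with h | h
    · exact (hbad u).1 h
    · exact (hbad u).2 h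

end

section
open Finset Sum
variable {V : Type*} [DecidableEq V] (G : SimpleGraph V)

lemma compat_symm {W : Type*} {K' : SComplex W} {p q : VPair K'} (h : VPair.Compatible p q) :
    VPair.Compatible q p :=
  ⟨h.1.symm, h.2.2.1.symm, h.2.1.symm, h.2.2.2.symm⟩

lemma lo_ne_hi (p q : VPair (addLeaves G)) : p.lo ≠ q.hi := by
  intro h
  have := congrArg Finset.card h
  rw [pair_lo_card, pair_hi_card] at this
  omega

lemma inr_mem_Qu_lo (b : V) : Sum.inr b ∈ (Qu G b).lo := by simp [Qu]
lemma inr_mem_leafE (b : V) : Sum.inr b ∈ leafE b := by simp [leafE]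

/-- Key dominance: `Qu b` can be inserted into any GVF containing a pair `(b, bc)`. -/
lemma dom_insert {b c : V} {p' : VPair (addLeaves G)}
    (hlo : p'.lo = {Sum.inl b}) (hhi : p'.hi = {Sum.inl b, Sum.inl c})
    {σ : Finset (VPair (addLeaves G))} (hσ : (MorseComplex (addLeaves G)).faces σ)
    (hp' : p' ∈ σ) : (MorseComplex (addLeaves G)).faces (insert (Qu G b) σ) := by
  obtain ⟨hne', hdvf, hnc⟩ := hσ
  have hinrhi : Sum.inr b ∉ p'.hi := by rw [hhi]; simp
  -- `Pu b` is not in σ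
  have hPu_not : Pu G b ∉ σ := by
    intro hPu
    have hPune : Pu G b ≠ p' := by
      intro h
      exact hinrhi (h ▸ (inr_mem_leafE b : Sum.inr b ∈ (Pu G b).hi))
    have := (hdvf _ hPu _ hp' hPune).1
    rw [hlo] at this
    exact this rfl
  -- Qu b is compatible with everything in σ
  have hcompat : ∀ q ∈ σ, q ≠ Qu G b → VPair.Compatible (Qu G b) q := by
    intro q hq hqw
    refine ⟨?_, lo_ne_hi G _ q, (lo_ne_hi G q _).symm, ?_⟩
    · intro h
      have : Sum.inr b ∈ q.lo := h ▸ inr_mem_Qu_lo G b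
      exact hqw (pair_lo_inr G this)
    · intro h
      have : Sum.inr b ∈ q.hi := h ▸ (inr_mem_leafE b : Sum.inr b ∈ (Qu G b).hi)
      rcases pair_with_inr G this with h2 | h2
      · exact hPu_not (h2 ▸ hq)
      · exact hqw h2
  refine ⟨⟨Qu G b, Finset.mem_insert_self _ _⟩, ?_, ?_⟩
  · -- DVF
    intro p hp q hq hpq
    simp only [Set.mem_setOf_eq, Finset.mem_insert] at hp hq
    rcases hp with rfl | hp
    · rcases hq with rfl | hq
      · exact absurd rfl hpq
      · exact hcompat q hq (fun h => hpq h.symm)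
    · rcases hq with rfl | hq
      · exact compat_symm (hcompat p hp hpq)
      · exact hdvf p hp q hq hpq
  · -- no closed path
    rintro ⟨k, hk, cc, hmem, hstep⟩
    have hinσ : ∀ i, cc i ∈ σ := by
      intro i
      have hi := hmem i
      simp only [Set.mem_setOf_eq, Finset.mem_insert] at hi
      rcases hi with hi | hi
      · exfalso
        -- cc i = Qu b; look at the predecessor j = i - 1
        have hj : cc ((i - 1) + 1) = Qu G b := by rw [sub_add_cancel]; exact hi
        obtain ⟨hsub, hlone, -⟩ := hstep (i - 1)
        rw [hj] at hsub hlone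
        have hinr : Sum.inr b ∈ (cc (i - 1)).hi := hsub (inr_mem_Qu_lo G b)
        rcases pair_with_inr G hinr with h2 | h2
        · -- cc (i-1) = Pu b : conflicts with p'
          have hji := hmem (i - 1)
          simp only [Set.mem_setOf_eq, Finset.mem_insert] at hji
          rcases hji with hji | hji
          · exact Pu_ne_Qu G b b (h2 ▸ hji)
          · exact hPu_not (h2 ▸ hji)
        · rw [h2] at hlone; exact hlone rfl
      · exact hi
    exact hnc ⟨k, hk, cc, fun i => hinσ i, hstep⟩

end

section
open Finset Sum
variable {V : Type*} [DecidableEq V] (G : SimpleGraph V)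

/-- "Bad" pairs: not of leaf type. -/
def BadP (p : VPair (addLeaves G)) : Prop := ∀ u, p ≠ Pu G u ∧ p ≠ Qu G u

lemma Qu_not_bad (b : V) : ¬ BadP G (Qu G b) := fun h => (h b).2 rfl

lemma M_down_closed {F : Finset (VPair (addLeaves G)) → Prop}
    (hdc : ∀ σ τ, F τ → σ ⊆ τ → σ.Nonempty → F σ) : True := trivial

lemma collapse_all : ∀ (S : Finset (VPair (addLeaves G))), (∀ p ∈ S, BadP G p) →
    Nonempty (ContinuousMap.HomotopyEquiv
      (realizationP (MorseComplex (addLeaves G)).faces)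
      (realizationP (fun σ => (MorseComplex (addLeaves G)).faces σ ∧ ∀ p ∈ S, p ∉ σ))) := by
  classical
  intro S
  induction S using Finset.induction with
  | empty =>
    intro _
    refine ⟨(Homeomorph.setCongr (realizationP_congr fun σ => ?_)).toHomotopyEquiv⟩
    simp
  | @insert w' S hw'S ih =>
    intro hS
    obtain ⟨hw'bad, hSbad⟩ : BadP G w' ∧ ∀ p ∈ S, BadP G p := by
      constructor
      · exact hS w' (Finset.mem_insert_self _ _)
      · exact fun p hp => hS p (Finset.mem_insert_of_mem hp)
    obtain ⟨he⟩ := ih hSbad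
    obtain ⟨b, c, hbc, hlo, hhi⟩ := bad_pair_struct G w' hw'bad
    set F : Finset (VPair (addLeaves G)) → Prop :=
      fun σ => (MorseComplex (addLeaves G)).faces σ ∧ ∀ p ∈ S, p ∉ σ with hF
    have hne : Qu G b ≠ w' := by
      intro h
      have := congrArg VPair.lo h
      rw [hlo] at this
      have : Sum.inr b ∈ ({Sum.inl b} : Finset (V ⊕ V)) := this ▸ inr_mem_Qu_lo G b
      simp at this
    have hdc : ∀ σ τ, F τ → σ ⊆ τ → σ.Nonempty → F σ := by
      rintro σ τ ⟨h1, h2⟩ hsub hnon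
      exact ⟨(MorseComplex (addLeaves G)).down_closed h1 hsub hnon,
        fun p hp hpσ => h2 p hp (hsub hpσ)⟩
    have hdom : ∀ σ, F σ → w' ∈ σ → F (insert (Qu G b) σ) := by
      rintro σ ⟨h1, h2⟩ hw'σ
      refine ⟨dom_insert G hlo hhi h1 hw'σ, ?_⟩
      intro p hp hmem
      rcases Finset.mem_insert.mp hmem with rfl | hmem2
      · exact Qu_not_bad G b (hSbad _ hp)
      · exact h2 p hp hmem2
    have he2 := elemCollapse hne hdc hdom
    have he3 : realizationP (fun σ => F σ ∧ w' ∉ σ) =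
        realizationP (fun σ => (MorseComplex (addLeaves G)).faces σ ∧
          ∀ p ∈ insert w' S, p ∉ σ) := by
      apply realizationP_congr
      intro σ
      rw [hF]
      simp only [Finset.forall_mem_insert]
      tauto
    exact ⟨(he.trans he2).trans (Homeomorph.setCongr he3).toHomotopyEquiv⟩

/-- The leaf complex predicate. -/
def LeafC (σ : Finset (VPair (addLeaves G))) : Prop :=
  σ.Nonempty ∧ (∀ p ∈ σ, ∃ u, p = Pu G u ∨ p = Qu G u) ∧
    ∀ u, ¬(Pu G u ∈ σ ∧ Qu G u ∈ σ)

lemma leafE_inj {u u' : V} (h : leafE u = (leafE u' : Finset (V ⊕ V))) : u = u' := by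
  have : Sum.inr u ∈ leafE u' := h ▸ inr_mem_leafE u
  simp only [leafE, Finset.mem_insert, Finset.mem_singleton] at this
  rcases this with h2 | h2
  · exact absurd h2 (by simp)
  · injection h2

lemma leaf_iff (σ : Finset (VPair (addLeaves G))) :
    ((MorseComplex (addLeaves G)).faces σ ∧ ∀ p, BadP G p → p ∉ σ) ↔ LeafC G σ := by
  constructor
  · rintro ⟨⟨hne, hdvf, hnc⟩, hbad⟩
    refine ⟨hne, ?_, ?_⟩
    · intro p hp
      by_contra h
      push_neg at h
      exact hbad p h hp
    · rintro u ⟨hPu, hQu⟩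
      exact (hdvf _ hPu _ hQu (Pu_ne_Qu G u u)).2.2.2 rfl
  · rintro ⟨hne, hrep, hpair⟩
    have hsame : ∀ p ∈ σ, ∀ q ∈ σ, ∀ u, (p = Pu G u ∨ p = Qu G u) →
        (q = Pu G u ∨ q = Qu G u) → p ≠ q → False := by
      intro p hp q hq u h1 h2 hpq
      rcases h1 with rfl | rfl <;> rcases h2 with rfl | rfl
      · exact hpq rfl
      · exact hpair u ⟨hp, hq⟩
      · exact hpair u ⟨hq, hp⟩
      · exact hpq rfl
    refine ⟨⟨hne, ?_, ?_⟩, ?_⟩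
    · -- DVF
      intro p hp q hq hpq
      obtain ⟨u, hu⟩ := hrep p hp
      obtain ⟨u', hu'⟩ := hrep q hq
      have huu' : u ≠ u' := by
        intro h; subst h; exact hsame p hp q hq u hu hu' hpq
      refine ⟨?_, lo_ne_hi G p q, (lo_ne_hi G q p).symm, ?_⟩
      · intro h
        rcases hu with rfl | rfl <;> rcases hu' with rfl | rfl <;>
          simp only [Pu, Qu] at h <;>
        · rw [Finset.singleton_inj] at h
          first
            | exact huu' (by injection h)
            | exact absurd h (by simp)
      · intro h
        rcases hu with rfl | rfl <;> rcases hu' with rfl | rfl <;>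
          exact huu' (leafE_inj h)
    · -- acyclic
      rintro ⟨k, hk, cc, hmem, hstep⟩
      obtain ⟨u, hu⟩ := hrep _ (hmem 0)
      obtain ⟨u', hu'⟩ := hrep _ (hmem (0 + 1))
      obtain ⟨hsub, hlone, -⟩ := hstep 0
      have hcc0hi : (cc 0).hi = leafE u := by rcases hu with h | h <;> rw [h] <;> rfl
      have huu' : u' = u := by
        rw [hcc0hi] at hsub
        have : ∀ x ∈ (cc (0+1)).lo, x ∈ leafE u := hsub
        rcases hu' with h | h
        · have := this (Sum.inl u') (by rw [h]; simp [Pu])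
          simp only [leafE, Finset.mem_insert, Finset.mem_singleton] at this
          rcases this with h2 | h2
          · injection h2
          · exact absurd h2 (by simp)
        · have := this (Sum.inr u') (by rw [h]; exact inr_mem_Qu_lo G u')
          simp only [leafE, Finset.mem_insert, Finset.mem_singleton] at this
          rcases this with h2 | h2
          · exact absurd h2 (by simp)
          · injection h2
      have hne2 : cc (0+1) ≠ cc 0 := by
        intro h; rw [h] at hlone; exact hlone rfl
      exact hsame _ (hmem (0+1)) _ (hmem 0) u (huu' ▸ hu') hu hne2
    · intro p hbad hp
      obtain ⟨u, hu⟩ := hrep p hp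
      rcases hu with rfl | rfl
      · exact (hbad u).1 rfl
      · exact (hbad u).2 rfl

end

section
open Finset Sum
variable {V : Type*} [DecidableEq V] [Fintype V] (G : SimpleGraph V)

lemma max_add_max_neg (a : ℝ) : max a 0 + max (-a) 0 = |a| := by
  rcases le_total 0 a with h | h
  · rw [max_eq_left h, max_eq_right (neg_nonpos.mpr h), add_zero, abs_of_nonneg h]
  · rw [max_eq_right h, max_eq_left (neg_nonneg.mpr h), zero_add, abs_of_nonpos h]

lemma max_sub_max_neg (a : ℝ) : max a 0 - max (-a) 0 = a := by
  rcases le_total 0 a with h | h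
  · rw [max_eq_left h, max_eq_right (neg_nonpos.mpr h), sub_zero]
  · rw [max_eq_right h, max_eq_left (neg_nonneg.mpr h), zero_sub, neg_neg]

lemma max_ne_zero_iff (a : ℝ) : max a 0 ≠ 0 ↔ 0 < a := by
  constructor
  · intro h
    by_contra h2
    push_neg at h2
    exact h (max_eq_right h2)
  · intro h h2
    rw [max_eq_left h.le] at h2
    exact h.ne' h2

lemma abs_sub_of_or {a b : ℝ} (ha : 0 ≤ a) (hb : 0 ≤ b) (h : a = 0 ∨ b = 0) :
    |a - b| = a + b := by
  rcases h with h | h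
  · rw [h, zero_sub, abs_neg, abs_of_nonneg hb, zero_add]
  · rw [h, sub_zero, abs_of_nonneg ha, add_zero]

lemma finite_vpair : Finite (VPair (addLeaves G)) :=
  Finite.of_injective (fun p => (p.lo, p.hi))
    (fun p q h => VPair.ext' (congrArg Prod.fst h) (congrArg Prod.snd h))

variable [Fintype (VPair (addLeaves G))]

local notation "e" => Fintype.equivFin V

/-- The coordinate vector of a point of the leaf complex. -/
noncomputable def gvec (f : VPair (addLeaves G) → ℝ) :
    EuclideanSpace ℝ (Fin (Fintype.card V)) :=
  (WithLp.equiv 2 _).symm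
    (fun i => f (Pu G ((e).symm i)) - f (Qu G ((e).symm i)))

lemma gvec_apply (f : VPair (addLeaves G) → ℝ) (i : Fin (Fintype.card V)) :
    gvec G f i = f (Pu G ((e).symm i)) - f (Qu G ((e).symm i)) := rfl

lemma memD_props {f : VPair (addLeaves G) → ℝ} (hf : f ∈ realizationP (LeafC G)) :
    (∀ p, 0 ≤ f p) ∧ (∀ u, f (Pu G u) = 0 ∨ f (Qu G u) = 0) ∧
      (∑ u : V, (f (Pu G u) + f (Qu G u))) = 1 ∧
      ∀ p : VPair (addLeaves G), (∀ u, p ≠ Pu G u ∧ p ≠ Qu G u) → f p = 0 := by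
  obtain ⟨σ, ⟨hne, hrep, hpair⟩, hpos, hsupp, hsum⟩ := hf
  have hzero : ∀ p ∉ σ, f p = 0 := fun p hp => by_contra fun h => hp (hsupp p h)
  refine ⟨hpos, ?_, ?_, ?_⟩
  · intro u
    by_cases h1 : Pu G u ∈ σ
    · by_cases h2 : Qu G u ∈ σ
      · exact absurd ⟨h1, h2⟩ (hpair u)
      · exact Or.inr (hzero _ h2)
    · exact Or.inl (hzero _ h1)
  · have hσT : σ ⊆ Finset.univ.image (Pu G) ∪ Finset.univ.image (Qu G) := by
      intro p hp
      obtain ⟨u, h | h⟩ := hrep p hp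
      · exact Finset.mem_union_left _ (h ▸ Finset.mem_image_of_mem _ (Finset.mem_univ u))
      · exact Finset.mem_union_right _ (h ▸ Finset.mem_image_of_mem _ (Finset.mem_univ u))
    have hdisj : Disjoint (Finset.univ.image (Pu G)) (Finset.univ.image (Qu G)) := by
      rw [Finset.disjoint_left]
      rintro a ha hb
      obtain ⟨u, -, rfl⟩ := Finset.mem_image.mp ha
      obtain ⟨u', -, h⟩ := Finset.mem_image.mp hb
      exact Pu_ne_Qu G u u' h.symm
    have h1 : ∑ p ∈ Finset.univ.image (Pu G) ∪ Finset.univ.image (Qu G), f p = 1 := by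
      rw [← Finset.sum_subset hσT (fun p _ hp => hzero p hp)]
      exact hsum
    rw [Finset.sum_union hdisj,
      Finset.sum_image (fun x _ y _ h => Pu_inj G h),
      Finset.sum_image (fun x _ y _ h => Qu_inj G h)] at h1
    rw [Finset.sum_add_distrib]
    exact h1
  · intro p hbad
    apply hzero
    intro hp
    obtain ⟨u, h | h⟩ := hrep p hp
    · exact (hbad u).1 h
    · exact (hbad u).2 h

lemma gvec_l1 {f : VPair (addLeaves G) → ℝ} (hf : f ∈ realizationP (LeafC G)) :
    ∑ i, |gvec G f i| = 1 := by
  obtain ⟨hpos, hor, hsum, -⟩ := memD_props G hf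
  rw [← Equiv.sum_comp (e) (fun i => |gvec G f i|)]
  rw [← hsum]
  apply Finset.sum_congr rfl
  intro u _
  rw [gvec_apply, Equiv.symm_apply_apply]
  exact abs_sub_of_or (hpos _) (hpos _) (hor u)

lemma gvec_norm_ne {f : VPair (addLeaves G) → ℝ} (hf : f ∈ realizationP (LeafC G)) :
    ‖gvec G f‖ ≠ 0 := by
  rw [norm_ne_zero_iff]
  intro h0
  have h1 : ∑ i, |gvec G f i| = 0 := by
    apply Finset.sum_eq_zero
    intro i _
    have : gvec G f i = 0 := by rw [h0]; rfl
    rw [this, abs_zero]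
  rw [gvec_l1 G hf] at h1
  exact one_ne_zero h1
end

section
open Finset Sum
variable {V : Type*} [DecidableEq V] [Fintype V] (G : SimpleGraph V)
variable [Fintype (VPair (addLeaves G))]

local notation "e" => Fintype.equivFin V

noncomputable def sAbs (x : EuclideanSpace ℝ (Fin (Fintype.card V))) : ℝ := ∑ i, |x i|

noncomputable def fPsi (x : EuclideanSpace ℝ (Fin (Fintype.card V))) :
    VPair (addLeaves G) → ℝ :=
  fun p => (sAbs x)⁻¹ *
    ((∑ u : V, if p = Pu G u then max (x ((e) u)) 0 else 0) +
     (∑ u : V, if p = Qu G u then max (-(x ((e) u))) 0 else 0))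

lemma fPsi_Pu (x : EuclideanSpace ℝ (Fin (Fintype.card V))) (u₀ : V) :
    fPsi G x (Pu G u₀) = (sAbs x)⁻¹ * max (x ((e) u₀)) 0 := by
  unfold fPsi
  rw [Finset.sum_eq_single u₀
      (fun u _ hu => if_neg (fun h => hu (Pu_inj G h).symm))
      (fun h => absurd (Finset.mem_univ u₀) h),
    if_pos rfl,
    Finset.sum_eq_zero (fun u _ => if_neg (fun h => Pu_ne_Qu G u₀ u h)), add_zero]

lemma fPsi_Qu (x : EuclideanSpace ℝ (Fin (Fintype.card V))) (u₀ : V) :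
    fPsi G x (Qu G u₀) = (sAbs x)⁻¹ * max (-(x ((e) u₀))) 0 := by
  unfold fPsi
  rw [Finset.sum_eq_single u₀
      (fun u _ hu => if_neg (fun h => hu (Qu_inj G h).symm))
      (fun h => absurd (Finset.mem_univ u₀) h),
    if_pos rfl,
    Finset.sum_eq_zero (fun u _ => if_neg (fun h => Pu_ne_Qu G u u₀ h.symm)), zero_add]

lemma fPsi_bad (x : EuclideanSpace ℝ (Fin (Fintype.card V)))
    {p : VPair (addLeaves G)} (hp : ∀ u, p ≠ Pu G u ∧ p ≠ Qu G u) : fPsi G x p = 0 := by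
  unfold fPsi
  rw [Finset.sum_eq_zero (fun u _ => if_neg (hp u).1),
    Finset.sum_eq_zero (fun u _ => if_neg (hp u).2), add_zero, mul_zero]

lemma fPsi_nonneg (x : EuclideanSpace ℝ (Fin (Fintype.card V)))
    (hs : 0 ≤ sAbs x) (p : VPair (addLeaves G)) : 0 ≤ fPsi G x p := by
  unfold fPsi
  apply mul_nonneg (inv_nonneg.mpr hs)
  apply add_nonneg <;>
    exact Finset.sum_nonneg fun u _ => by
      split
      · exact le_max_right _ 0
      · exact le_refl 0

lemma sAbs_pos {x : EuclideanSpace ℝ (Fin (Fintype.card V))} (hx : ‖x‖ = 1) :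
    0 < sAbs x := by
  have hx0 : x ≠ 0 := by
    intro h; rw [h, norm_zero] at hx; exact zero_ne_one hx
  have : ∃ i, x i ≠ 0 := by
    by_contra h
    push_neg at h
    exact hx0 (PiLp.ext fun i => by simp [h i])
  obtain ⟨i, hi⟩ := this
  exact Finset.sum_pos' (fun j _ => abs_nonneg _) ⟨i, Finset.mem_univ i, abs_pos.mpr hi⟩

lemma fPsi_mem {x : EuclideanSpace ℝ (Fin (Fintype.card V))} (hx : ‖x‖ = 1) :
    fPsi G x ∈ realizationP (LeafC G) := by
  classical
  have hs := sAbs_pos (V := V) hx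
  set σ : Finset (VPair (addLeaves G)) := Finset.univ.filter (fun p => fPsi G x p ≠ 0)
    with hσdef
  have hsupp : ∀ p, fPsi G x p ≠ 0 → p ∈ σ := fun p h =>
    Finset.mem_filter.mpr ⟨Finset.mem_univ p, h⟩
  have hzero : ∀ p ∉ σ, fPsi G x p = 0 := by
    intro p hp
    by_contra h
    exact hp (hsupp p h)
  have hrep : ∀ p ∈ σ, ∃ u, p = Pu G u ∨ p = Qu G u := by
    intro p hp
    by_contra hno
    push_neg at hno
    have hbad : ∀ u, p ≠ Pu G u ∧ p ≠ Qu G u := fun u => (hno u)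
    exact (Finset.mem_filter.mp hp).2 (fPsi_bad G x hbad)
  have hpair : ∀ u, ¬(Pu G u ∈ σ ∧ Qu G u ∈ σ) := by
    rintro u ⟨h1, h2⟩
    have h1' := (Finset.mem_filter.mp h1).2
    have h2' := (Finset.mem_filter.mp h2).2
    rw [fPsi_Pu] at h1'
    rw [fPsi_Qu] at h2'
    have hp1 : 0 < x ((e) u) :=
      (max_ne_zero_iff _).mp (fun h => h1' (by rw [h, mul_zero]))
    have hp2 : 0 < -(x ((e) u)) :=
      (max_ne_zero_iff _).mp (fun h => h2' (by rw [h, mul_zero]))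
    linarith
  have hnonempty : σ.Nonempty := by
    have : ∃ i, x i ≠ 0 := by
      by_contra h
      push_neg at h
      have : x = 0 := PiLp.ext fun i => by simp [h i]
      rw [this, norm_zero] at hx; exact zero_ne_one hx
    obtain ⟨i, hi⟩ := this
    rcases lt_or_gt_of_ne hi with h | h
    · refine ⟨Qu G ((e).symm i), hsupp _ ?_⟩
      rw [fPsi_Qu, Equiv.apply_symm_apply]
      exact mul_ne_zero (inv_ne_zero hs.ne')
        (by rw [max_eq_left (by linarith : -(x i) ≥ 0)]; linarith)
    · refine ⟨Pu G ((e).symm i), hsupp _ ?_⟩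
      rw [fPsi_Pu, Equiv.apply_symm_apply]
      exact mul_ne_zero (inv_ne_zero hs.ne')
        (by rw [max_eq_left h.le]; linarith)
  refine ⟨σ, ⟨hnonempty, hrep, hpair⟩, fPsi_nonneg G x hs.le, hsupp, ?_⟩
  rw [Finset.sum_subset (Finset.subset_univ σ) (fun p _ hp => hzero p hp)]
  unfold fPsi
  rw [← Finset.mul_sum]
  have hA : (∑ p : VPair (addLeaves G), ∑ u : V, if p = Pu G u then max (x ((e) u)) 0 else 0)
      = ∑ u : V, ∑ p : VPair (addLeaves G), if p = Pu G u then max (x ((e) u)) 0 else 0 :=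
    Finset.sum_comm
  have hB : (∑ p : VPair (addLeaves G), ∑ u : V, if p = Qu G u then max (-(x ((e) u))) 0 else 0)
      = ∑ u : V, ∑ p : VPair (addLeaves G), if p = Qu G u then max (-(x ((e) u))) 0 else 0 :=
    Finset.sum_comm
  rw [Finset.sum_add_distrib, hA, hB]
  have h1 : ∀ u : V, (∑ p : VPair (addLeaves G), if p = Pu G u then max (x ((e) u)) 0 else 0)
      = max (x ((e) u)) 0 := by
    intro u
    rw [Finset.sum_ite_eq' Finset.univ (Pu G u) (fun _ => max (x ((e) u)) 0),
      if_pos (Finset.mem_univ _)]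
  have h2 : ∀ u : V, (∑ p : VPair (addLeaves G), if p = Qu G u then max (-(x ((e) u))) 0 else 0)
      = max (-(x ((e) u))) 0 := by
    intro u
    rw [Finset.sum_ite_eq' Finset.univ (Qu G u) (fun _ => max (-(x ((e) u))) 0),
      if_pos (Finset.mem_univ _)]
  rw [Finset.sum_congr rfl (fun u _ => h1 u), Finset.sum_congr rfl (fun u _ => h2 u)]
  rw [← Finset.sum_add_distrib]
  rw [Finset.sum_congr rfl (fun u _ => max_add_max_neg (x ((e) u)))]
  rw [Equiv.sum_comp (e) (fun i => |x i|)]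
  exact inv_mul_cancel₀ hs.ne'

end

section
open Finset Sum
variable {V : Type*} [DecidableEq V] [Fintype V] (G : SimpleGraph V)
variable [Fintype (VPair (addLeaves G))]

local notation "e" => Fintype.equivFin V

noncomputable def leafHomeo :
    (realizationP (LeafC G) : Set (VPair (addLeaves G) → ℝ)) ≃ₜ
      Metric.sphere (0 : EuclideanSpace ℝ (Fin (Fintype.card V))) 1 where
  toFun f := ⟨‖gvec G f.1‖⁻¹ • gvec G f.1, by
    rw [mem_sphere_zero_iff_norm, norm_smul, norm_inv, norm_norm]
    exact inv_mul_cancel₀ (gvec_norm_ne G f.2)⟩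
  invFun x := ⟨fPsi G x.1, fPsi_mem G (mem_sphere_zero_iff_norm.mp x.2)⟩
  left_inv := by
    intro f
    apply Subtype.ext
    obtain ⟨hpos, hor, hsum, hbadz⟩ := memD_props G f.2
    set g := gvec G f.1 with hgdef
    have hN : ‖g‖ ≠ 0 := gvec_norm_ne G f.2
    have hNpos : 0 < ‖g‖ := lt_of_le_of_ne (norm_nonneg g) (Ne.symm hN)
    have hxi : ∀ i, (‖g‖⁻¹ • g) i = ‖g‖⁻¹ * g i := fun i => rfl
    have hsx : sAbs (‖g‖⁻¹ • g) = ‖g‖⁻¹ := by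
      unfold sAbs
      have : ∀ i, |(‖g‖⁻¹ • g) i| = ‖g‖⁻¹ * |g i| := by
        intro i
        rw [hxi, abs_mul, abs_of_nonneg (inv_nonneg.mpr (norm_nonneg g))]
      rw [Finset.sum_congr rfl (fun i _ => this i), ← Finset.mul_sum, gvec_l1 G f.2, mul_one]
    have hkey : ∀ a : ℝ, ‖g‖ * max (‖g‖⁻¹ * a) 0 = max a 0 := by
      intro a
      rw [mul_max_of_nonneg _ _ hNpos.le, mul_zero, ← mul_assoc,
        mul_inv_cancel₀ hN, one_mul]
    funext p
    show fPsi G (‖g‖⁻¹ • g) p = f.1 p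
    by_cases hp : ∃ u, p = Pu G u ∨ p = Qu G u
    · obtain ⟨u, rfl | rfl⟩ := hp
      · rw [fPsi_Pu, hsx, inv_inv, hxi, hkey, hgdef, gvec_apply, Equiv.symm_apply_apply]
        rcases hor u with h | h
        · rw [h, zero_sub, max_eq_right (neg_nonpos.mpr (hpos _))]
        · rw [h, sub_zero, max_eq_left (hpos _)]
      · rw [fPsi_Qu, hsx, inv_inv, hxi, ← mul_neg, hkey, hgdef, gvec_apply, Equiv.symm_apply_apply,
          neg_sub]
        rcases hor u with h | h
        · rw [h, sub_zero, max_eq_left (hpos _)]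
        · rw [h, zero_sub, max_eq_right (neg_nonpos.mpr (hpos _))]
    · push_neg at hp
      rw [fPsi_bad G _ hp, hbadz p hp]
  right_inv := by
    intro x
    apply Subtype.ext
    have hx1 : ‖x.1‖ = 1 := mem_sphere_zero_iff_norm.mp x.2
    have hs : 0 < sAbs x.1 := sAbs_pos (V := V) hx1
    have hg : gvec G (fPsi G x.1) = (sAbs x.1)⁻¹ • x.1 := by
      refine PiLp.ext fun i => ?_
      show gvec G (fPsi G x.1) i = (sAbs x.1)⁻¹ * x.1 i
      rw [gvec_apply, fPsi_Pu, fPsi_Qu, Equiv.apply_symm_apply, ← mul_sub, max_sub_max_neg]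
    show ‖gvec G (fPsi G x.1)‖⁻¹ • gvec G (fPsi G x.1) = x.1
    rw [hg, norm_smul, hx1, mul_one, Real.norm_eq_abs,
      abs_of_pos (inv_pos.mpr hs), inv_inv, smul_smul, mul_inv_cancel₀ hs.ne', one_smul]
  continuous_toFun := by
    have hgc : Continuous fun f : (realizationP (LeafC G) : Set (VPair (addLeaves G) → ℝ)) =>
        gvec G f.1 := by
      unfold gvec
      apply (PiLp.continuous_toLp 2 (fun _ : Fin (Fintype.card V) => ℝ)).comp
      apply continuous_pi
      intro i
      exact ((continuous_apply _).comp continuous_subtype_val).sub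
        ((continuous_apply _).comp continuous_subtype_val)
    apply Continuous.subtype_mk
    exact (hgc.norm.inv₀ (fun f => gvec_norm_ne G f.2)).smul hgc
  continuous_invFun := by
    have hco : ∀ i, Continuous fun x : (Metric.sphere (0 : EuclideanSpace ℝ (Fin (Fintype.card V))) 1) => x.1 i :=
      fun i => (continuous_apply i).comp
        ((PiLp.continuous_ofLp 2 (fun _ : Fin (Fintype.card V) => ℝ)).comp continuous_subtype_val)
    have hsc : Continuous fun x : (Metric.sphere (0 : EuclideanSpace ℝ (Fin (Fintype.card V))) 1) =>
        sAbs x.1 := by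
      unfold sAbs
      apply continuous_finset_sum
      intro i _
      exact (hco i).abs
    apply Continuous.subtype_mk
    apply continuous_pi
    intro p
    unfold fPsi
    apply Continuous.mul
    · exact hsc.inv₀ (fun x => (sAbs_pos (V := V) (mem_sphere_zero_iff_norm.mp x.2)).ne')
    · apply Continuous.add
      · apply continuous_finset_sum
        intro u _
        by_cases h : p = Pu G u
        · simp only [if_pos h]
          exact (hco _).max continuous_const
        · simp only [if_neg h]
          exact continuous_const
      · apply continuous_finset_sum
        intro u _
        by_cases h : p = Qu G u
        · simp only [if_pos h]
          exact (hco _).neg.max continuous_const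
        · simp only [if_neg h]
          exact continuous_const

end

/-- for a connected graph `G` with `v` vertices,
`M(L(G)) ≃ S^{v-1}`. -/
theorem stmt_13 {V : Type*} [Fintype V] [DecidableEq V] (G : SimpleGraph V)
    (hc : G.Connected) :
    Nonempty (ContinuousMap.HomotopyEquiv
      (realization (MorseComplex (addLeaves G)))
      (Metric.sphere (0 : EuclideanSpace ℝ (Fin (Fintype.card V))) 1)) := by
  classical
  haveI : Finite (VPair (addLeaves G)) := finite_vpair G
  haveI : Fintype (VPair (addLeaves G)) := Fintype.ofFinite _
  obtain ⟨he⟩ := collapse_all G (Finset.univ.filter (fun p => BadP G p))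
    (fun p hp => (Finset.mem_filter.mp hp).2)
  have hcong : realizationP (fun σ => (MorseComplex (addLeaves G)).faces σ ∧
      ∀ p ∈ Finset.univ.filter (fun p => BadP G p), p ∉ σ) =
      realizationP (LeafC G) := by
    apply realizationP_congr
    intro σ
    rw [← leaf_iff]
    constructor
    · rintro ⟨h1, h2⟩
      exact ⟨h1, fun p hb => h2 p (Finset.mem_filter.mpr ⟨Finset.mem_univ p, hb⟩)⟩
    · rintro ⟨h1, h2⟩
      exact ⟨h1, fun p hp => h2 p (Finset.mem_filter.mp hp).2⟩
  rw [realization_eq]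
  exact ⟨(he.trans (Homeomorph.setCongr hcong).toHomotopyEquiv).trans
    (leafHomeo G).toHomotopyEquiv⟩
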